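/- arXiv:1908.05594 — 2 statements merged into one kernel-verified Lean document; each statement's English description precedes it below -/
import Mathlib

section
/- Let p ≥ 5 be a prime, let a and n be positive integers with gcd(a,p) = 1, and let k be an odd integer with 1 ≤ k ≤ ap^n - 1. Then v_p(s(ap^n, ap^n - k)) ≥ n. -/
open Polynomial Finset

/-- The (unsigned) Stirling number of the first kind `s(n,k)`, defined by
`x(x+1)(x+2)⋯(x+n-1) = Σ_{k=0}^{n} s(n,k) x^k`. -/
noncomputable def stirlingFirst (n k : ℕ) : ℕ := (ascPochhammer ℕ n).coeff k

/-- ascPochhammer as a product. -/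
lemma ascPochhammer_eq_prod_range' (R : Type*) [CommSemiring R] (n : ℕ) :
    ascPochhammer R n = ∏ i ∈ range n, (X + (i : R[X])) := by
  induction n with
  | zero => simp
  | succ n ih => rw [ascPochhammer_succ_right, ih, prod_range_succ]

lemma coeff_comp_neg_X {R : Type*} [CommRing R] (f : R[X]) (j : ℕ) :
    (f.comp (-X)).coeff j = (-1) ^ j * f.coeff j := by
  induction f using Polynomial.induction_on' with
  | add f g hf hg => simp [add_comp, hf, hg, mul_add]
  | monomial m b =>
    have h1 : ((-X : R[X])) ^ m = C ((-1 : R) ^ m) * X ^ m := by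
      rw [neg_pow, map_pow, map_neg, map_one]
    rw [monomial_comp, h1, ← mul_assoc, mul_comm (C b), mul_assoc, coeff_C_mul,
      coeff_C_mul, coeff_X_pow, coeff_monomial]
    by_cases h : m = j
    · subst h; simp
    · simp [h, Ne.symm h]

/-- Positivity of ascPochhammer coefficients. -/
lemma ascPochhammer_coeff_pos : ∀ m j : ℕ, 1 ≤ j → j ≤ m →
    0 < (ascPochhammer ℕ m).coeff j := by
  intro m
  induction m with
  | zero => intro j h1 h2; omega
  | succ m ih =>
    intro j h1 h2
    rw [ascPochhammer_succ_right, mul_add, coeff_add, mul_comm _ ((m : ℕ[X])),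
      ← C_eq_natCast, coeff_C_mul]
    obtain ⟨i, rfl⟩ : ∃ i, j = i + 1 := ⟨j - 1, by omega⟩
    rw [coeff_mul_X]
    rcases Nat.eq_zero_or_pos m with hm | hm
    · subst hm
      obtain rfl : i = 0 := by omega
      simp [ascPochhammer]
    rcases Nat.eq_zero_or_pos i with hi | hi
    · subst hi
      have := ih 1 le_rfl hm
      positivity
    · have := ih i hi (by omega)
      positivity

/-- Reindexing a product over `range q` as a product over `ZMod q`. -/
lemma prod_range_eq_prod_zmod {q : ℕ} [NeZero q] {M : Type*} [CommMonoid M]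
    (f : ZMod q → M) : ∏ i ∈ range q, f (i : ZMod q) = ∏ x : ZMod q, f x := by
  refine Finset.prod_nbij' (fun i => (i : ZMod q)) (fun x => x.val) ?_ ?_ ?_ ?_ ?_
  · intro i _; exact mem_univ _
  · intro x _; exact mem_range.mpr x.val_lt
  · intro i hi; exact ZMod.val_cast_of_lt (mem_range.mp hi)
  · intro x _; exact ZMod.natCast_rightInverse x
  · intro i _; rfl

/-- Splitting the Pochhammer product mod q. -/
lemma prod_range_mul_cast {R : Type*} [CommRing R] (q : ℕ) (hq : ((q : ℕ) : R) = 0) (a : ℕ) :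
    ∏ i ∈ range (a * q), (X + (i : R[X])) = (∏ i ∈ range q, (X + (i : R[X]))) ^ a := by
  have hq' : ((q : ℕ) : R[X]) = 0 := by rw [← C_eq_natCast, hq, map_zero]
  induction a with
  | zero => simp
  | succ a ih =>
    rw [Nat.succ_mul, prod_range_add, ih, pow_succ]
    congr 1
    apply prod_congr rfl
    intro i _
    push_cast [hq']
    ring

/-- The polynomial `∏_{x ∈ ZMod q} (X + x)` is odd when `q` is odd. -/
lemma g_comp_neg_X {q : ℕ} [NeZero q] (hqodd : Odd q) :
    (∏ x : ZMod q, (X + C x)).comp (-X) = -∏ x : ZMod q, (X + C x) := by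
  rw [Polynomial.prod_comp]
  have h1 : ∀ x : ZMod q, (X + C x).comp (-X) = (-1) * (X - C x) := by
    intro x; rw [add_comp, X_comp, C_comp]; ring
  simp_rw [h1]
  rw [prod_mul_distrib, prod_const, card_univ, ZMod.card, hqodd.neg_one_pow]
  have h2 : ∏ x : ZMod q, (X - C x) = ∏ x : ZMod q, (X + C x) := by
    have := Equiv.prod_comp (Equiv.neg (ZMod q)) (fun x : ZMod q => X + C x)
    simpa [sub_eq_add_neg, map_neg] using this
  rw [h2, neg_one_mul]

theorem stmt8 (p a n k : ℕ) (hp : p.Prime) (hp5 : 5 ≤ p)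
    (ha : 1 ≤ a) (hn : 1 ≤ n) (hgcd : Nat.gcd a p = 1)
    (hkodd : Odd k) (hk1 : 1 ≤ k) (hk2 : k ≤ a * p ^ n - 1) :
    padicValNat p (stirlingFirst (a * p ^ n) (a * p ^ n - k)) ≥ n := by
  haveI : Fact p.Prime := ⟨hp⟩
  set q := p ^ n with hq
  have hq1 : 1 < q := Nat.one_lt_pow (by omega) (by omega)
  have hqodd : Odd q := Odd.pow (hp.odd_of_ne_two (by omega))
  haveI : NeZero q := ⟨by omega⟩
  set m := a * q with hm
  have hm1 : k + 1 ≤ m := by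
    have : 1 ≤ m := Nat.mul_pos (by omega) (by omega)
    omega
  set d := m - k with hd
  have hdk : d + k = m := by omega
  set R := ZMod q with hR
  set g : R[X] := ∏ x : ZMod q, (X + C x) with hg
  -- Step A : ascPochhammer R m = g ^ a
  have hrangeg : ∏ i ∈ range q, (X + (i : R[X])) = g := by
    rw [hg, ← prod_range_eq_prod_zmod (fun x : ZMod q => X + C x)]
    exact prod_congr rfl fun i _ => by rw [C_eq_natCast]
  have hA : ascPochhammer R m = g ^ a := by
    rw [ascPochhammer_eq_prod_range', hm, prod_range_mul_cast q (ZMod.natCast_self q) a, hrangeg]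
  -- Step B : coefficient of degree d of g^a vanishes
  have hB : (ascPochhammer R m).coeff d = 0 := by
    have hC : ((-1 : R[X])) ^ a = C ((-1 : R) ^ a) := by rw [map_pow, map_neg, map_one]
    have hcomp : ((g ^ a).comp (-X)) = C ((-1 : R) ^ a) * g ^ a := by
      rw [pow_comp, g_comp_neg_X hqodd, ← hg, neg_pow, hC]
    have hco := coeff_comp_neg_X (g ^ a) d
    rw [hcomp, coeff_C_mul] at hco
    · -- (-1)^a * c = (-1)^d * c
      set c := (g ^ a).coeff d with hc
      have hpar : ((-1 : R)) ^ a = -(-1) ^ d := by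
        have h1 : ((-1 : R)) ^ m = ((-1) ^ q) ^ a := by rw [← pow_mul, hm, mul_comm]
        have h2 : ((-1 : R)) ^ m = (-1) ^ d * (-1) ^ k := by rw [← pow_add, hdk]
        rw [hqodd.neg_one_pow] at h1
        rw [hkodd.neg_one_pow] at h2
        have h3 : ((-1 : R)) ^ a = (-1) ^ m := h1.symm
        rw [h3, h2]
        ring
      have h2c : (2 : R) * c = 0 := by
        have hx : (-1 : R) ^ d * ((2 : R) * c) = 0 := by
          have : (-1 : R) ^ d * c - (-1) ^ a * c = 0 := by rw [hco]; ring
          rw [hpar] at this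
          calc (-1 : R) ^ d * (2 * c) = (-1) ^ d * c - -(-1) ^ d * c := by ring
            _ = 0 := this
        have hu : IsUnit ((-1 : R) ^ d) := (IsUnit.neg isUnit_one).pow d
        exact (IsUnit.mul_right_eq_zero hu).mp hx
      have h2u : IsUnit (2 : R) := by
        have h' : IsUnit ((2 : ℕ) : ZMod q) :=
          (ZMod.isUnit_iff_coprime 2 q).mpr (Nat.coprime_two_left.mpr hqodd)
        simpa using h'
      have : c = 0 := by
        have := (IsUnit.mul_right_eq_zero h2u).mp h2c
        exact this
      rw [hA, ← hc, this]
  -- Step C : conclude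
  have hcast : ((stirlingFirst m d : ℕ) : R) = 0 := by
    have hmap := ascPochhammer_map (Nat.castRingHom R) m
    have := congrArg (fun P => P.coeff d) hmap
    simp only [coeff_map] at this
    rw [← this] at hB
    exact hB
  have hdvd : q ∣ stirlingFirst m d := (ZMod.natCast_eq_zero_iff _ _).mp hcast
  have hpos : 0 < stirlingFirst m d :=
    ascPochhammer_coeff_pos m d (by omega) (by omega)
  rw [ge_iff_le, ← padicValNat_dvd_iff_le (by omega)]
  rw [← hq]
  exact hdvd
end

section
/- Let p be an odd prime and let r ≥ 2 be an even integer with p ≥ r+3. Then H(p-1, r) ≡ -(1/r)·H_{p-1}^{(r)} (mod p^2), i.e., v_p(H(p-1,r) + (1/r)·H_{p-1}^{(r)}) ≥ 2 (with the convention that this sum may be zero). -/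
open Finset MvPolynomial

/-- `H(n,k)`: the `k`-th elementary symmetric function of `1, 1/2, ..., 1/n`. -/
def elemSymH (n k : ℕ) : ℚ :=
  ∑ t ∈ (Finset.Icc 1 n).powersetCard k, ∏ i ∈ t, (1 : ℚ) / (i : ℚ)

/-- The generalized harmonic number `H_n^{(r)} = Σ_{i=1}^{n} 1/i^r`. -/
def genHarmonic (n r : ℕ) : ℚ := ∑ i ∈ Finset.Icc 1 n, (1 : ℚ) / (i : ℚ) ^ r

-- helper: padicNorm of a nat 0<k<p is 1
lemma norm_nat_one (p k : ℕ) [hp : Fact p.Prime] (h0 : 0 < k) (h1 : k < p) :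
    padicNorm p (k : ℚ) = 1 := by
  have : ¬ (p:ℤ) ∣ (k:ℤ) := by
    rw [Int.natCast_dvd_natCast]
    exact fun hd => absurd (Nat.le_of_dvd h0 hd) (by omega)
  simpa using (padicNorm.int_eq_one_iff (p := p) (k:ℤ)).mpr this

lemma norm_int_le (p : ℕ) [hp : Fact p.Prime] (z : ℤ) (h : (p:ℤ) ∣ z) :
    padicNorm p (z:ℚ) ≤ ((p:ℚ))⁻¹ := by
  obtain ⟨w, rfl⟩ := h
  push_cast
  rw [padicNorm.mul]
  calc padicNorm p (p:ℚ) * padicNorm p (w:ℚ) ≤ ((p:ℚ))⁻¹ * 1 := by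
        apply mul_le_mul
        · rw [padicNorm.padicNorm_p hp.out.one_lt]
        · exact padicNorm.of_int w
        · exact padicNorm.nonneg _
        · positivity
    _ = ((p:ℚ))⁻¹ := mul_one _

noncomputable def xv (n : ℕ) : Fin n → ℚ := fun i => (1:ℚ) / ((i:ℕ) + 1 : ℚ)

def emb (n : ℕ) : Fin n ↪ ℕ := ⟨fun i => (i:ℕ) + 1, show Function.Injective (fun i : Fin n => (i:ℕ) + 1) from fun a b h => by
  apply Fin.ext; simpa using h⟩

lemma Icc_eq_map (n : ℕ) : Finset.Icc 1 n = Finset.univ.map (emb n) := by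
  ext a
  simp only [Finset.mem_Icc, Finset.mem_map, Finset.mem_univ, true_and, emb,
    Function.Embedding.coeFn_mk]
  constructor
  · rintro ⟨h1, h2⟩
    exact ⟨⟨a - 1, by omega⟩, by simp; omega⟩
  · rintro ⟨i, rfl⟩
    have := i.2; omega

lemma aeval_esymm (n k : ℕ) :
    aeval (xv n) (esymm (Fin n) ℚ k) = elemSymH n k := by
  rw [aeval_esymm_eq_multiset_esymm, Finset.esymm_map_val, elemSymH, Icc_eq_map,
    Finset.powersetCard_map, Finset.sum_map]
  refine Finset.sum_congr rfl fun t _ => ?_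
  rw [show (Finset.mapEmbedding (emb n)).toEmbedding t = t.map (emb n) from Finset.mapEmbedding_apply, Finset.prod_map]
  refine (Finset.prod_congr rfl fun i _ => ?_).symm
  simp [emb, xv]

lemma aeval_psum (n j : ℕ) :
    aeval (xv n) (psum (Fin n) ℚ j) = genHarmonic n j := by
  rw [psum, map_sum, genHarmonic, Icc_eq_map, Finset.sum_map]
  refine Finset.sum_congr rfl fun i _ => ?_
  simp [emb, xv, div_pow]

lemma newton (n k : ℕ) :
    (k:ℚ) * elemSymH n k = (-1) ^ (k + 1) *
      ∑ a ∈ Finset.HasAntidiagonal.antidiagonal k with a.1 < k,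
        (-1) ^ a.1 * elemSymH n a.1 * genHarmonic n a.2 := by
  have h := congrArg (aeval (xv n)) (MvPolynomial.mul_esymm_eq_sum (Fin n) ℚ k)
  simpa only [map_mul, map_sum, map_pow, map_neg, map_one, map_natCast,
    aeval_esymm, aeval_psum] using h

lemma sum_pow_Icc (p m : ℕ) [hp : Fact p.Prime] (h1 : 1 ≤ m) (h2 : m < p - 1) :
    ∑ i ∈ Finset.Icc 1 (p-1), ((i : ZMod p))^m = 0 := by
  have hp1 : 1 < p := hp.out.one_lt
  have key : ∑ i ∈ Finset.Icc 1 (p-1), ((i : ZMod p))^m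
      = ∑ x ∈ (Finset.univ : Finset (ZMod p)) \ {0}, x^m := by
    refine Finset.sum_nbij' (fun i => (i : ZMod p)) (fun x => x.val) ?_ ?_ ?_ ?_ ?_
    · intro i hi
      simp only [Finset.mem_Icc] at hi
      simp only [Finset.mem_sdiff, Finset.mem_univ, Finset.mem_singleton, true_and]
      intro hd0
      rw [ZMod.natCast_eq_zero_iff] at hd0
      exact absurd (Nat.le_of_dvd (by omega) hd0) (by omega)
    · intro x hx
      simp only [Finset.mem_sdiff, Finset.mem_univ, Finset.mem_singleton, true_and] at hx
      have : x.val ≠ 0 := fun h => hx (by rwa [ZMod.val_eq_zero] at h)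
      have := x.val_lt
      simp only [Finset.mem_Icc]; omega
    · intro i hi
      simp only [Finset.mem_Icc] at hi
      exact ZMod.val_cast_of_lt (by omega)
    · intro x hx
      exact ZMod.natCast_rightInverse x
    · intros; rfl
  rw [key]
  have h0 : ((0:ZMod p))^m = 0 := zero_pow (by omega)
  have := FiniteField.sum_pow_lt_card_sub_one (K := ZMod p) m (by rwa [ZMod.card])
  rw [Finset.sum_sdiff_eq_sub (Finset.singleton_subset_iff.mpr (Finset.mem_univ 0)), this,
    Finset.sum_singleton, h0, sub_zero]

lemma hP (p j : ℕ) [hp : Fact p.Prime] (h1 : 1 ≤ j) (h2 : j ≤ p - 2) :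
    padicNorm p (genHarmonic (p-1) j) ≤ ((p:ℚ))⁻¹ := by
  have hp1 : 1 < p := hp.out.one_lt
  set M : ℕ := ∏ i ∈ Finset.Icc 1 (p-1), i with hM
  have hMz : ((M : ZMod p)) ≠ 0 := by
    rw [hM]
    push_cast
    rw [Finset.prod_ne_zero_iff]
    intro i hi
    simp only [Finset.mem_Icc] at hi
    intro hd0
    rw [ZMod.natCast_eq_zero_iff] at hd0
    exact absurd (Nat.le_of_dvd (by omega) hd0) (by omega)
  have hMdvd : ¬ p ∣ M := fun hd => hMz ((ZMod.natCast_eq_zero_iff M p).mpr hd)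
  set z : ℕ := ∑ i ∈ Finset.Icc 1 (p-1), (∏ k ∈ (Finset.Icc 1 (p-1)).erase i, k)^j with hz
  -- the product over the erase set, in ℚ
  have hprod : ∀ i ∈ Finset.Icc 1 (p-1),
      (∏ k ∈ (Finset.Icc 1 (p-1)).erase i, (k : ℚ))^j = (M:ℚ)^j * (1 / (i:ℚ)^j) := by
    intro i hi
    have hiq : (i:ℚ) ≠ 0 := by
      simp only [Finset.mem_Icc] at hi
      exact_mod_cast (by omega : i ≠ 0)
    have hMi : (i:ℚ) * (∏ k ∈ (Finset.Icc 1 (p-1)).erase i, (k : ℚ)) = (M:ℚ) := by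
      rw [hM]; push_cast
      exact Finset.mul_prod_erase _ _ hi
    field_simp
    rw [← hMi]; ring
  have claimA : (z:ℚ) = (M:ℚ)^j * genHarmonic (p-1) j := by
    rw [hz, genHarmonic]
    push_cast
    rw [Finset.mul_sum]
    exact Finset.sum_congr rfl hprod
  have claimB : (p:ℤ) ∣ (z:ℤ) := by
    have : ((z : ℕ) : ZMod p) = 0 := by
      rw [hz]
      push_cast
      have hterm : ∀ i ∈ Finset.Icc 1 (p-1),
          (∏ k ∈ (Finset.Icc 1 (p-1)).erase i, (k:ZMod p))^j
            = (M:ZMod p)^j * ((i:ZMod p))^(p-1-j) := by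
        intro i hi
        have hi' : (i : ZMod p) ≠ 0 := by
          simp only [Finset.mem_Icc] at hi
          intro hd0
          rw [ZMod.natCast_eq_zero_iff] at hd0
          exact absurd (Nat.le_of_dvd (by omega) hd0) (by omega)
        set t := (i : ZMod p) with ht
        have hone : t^(p-1) = 1 := ZMod.pow_card_sub_one_eq_one hi'
        have hMi : t * (∏ k ∈ (Finset.Icc 1 (p-1)).erase i, (k:ZMod p)) = (M:ZMod p) := by
          rw [hM]; push_cast
          exact Finset.mul_prod_erase _ _ hi
        have hpe : (∏ k ∈ (Finset.Icc 1 (p-1)).erase i, (k:ZMod p)) = t^(p-2) * (M:ZMod p) := by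
          apply mul_left_cancel₀ hi'
          rw [hMi, ← mul_assoc, show t * t^(p-2) = t^(p-1) by
            rw [← pow_succ']
            congr 1
            omega, hone, one_mul]
        rw [hpe, mul_pow, ← pow_mul]
        have hexp : (p-2) * j = (p-1) * (j-1) + (p-1-j) := by
          zify [show 2 ≤ p by omega, h1, show j ≤ p-1 by omega, show 1 ≤ p by omega]
          ring
        rw [hexp, pow_add, pow_mul, hone, one_pow, one_mul, mul_comm]
      rw [Finset.sum_congr rfl hterm, ← Finset.mul_sum,
        sum_pow_Icc p (p-1-j) (by omega) (by omega), mul_zero]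
    rwa [ZMod.natCast_eq_zero_iff, ← Int.natCast_dvd_natCast] at this
  -- conclude
  have hM0 : M ≠ 0 := by intro h0; exact hMdvd (by simp [h0])
  have hMq : ((M:ℚ))^j ≠ 0 := pow_ne_zero _ (by exact_mod_cast hM0)
  have hgen : genHarmonic (p-1) j = (z:ℚ) / (M:ℚ)^j := by
    rw [claimA]; field_simp
  rw [hgen, padicNorm.div]
  have hnormM : padicNorm p ((M:ℚ)^j) = 1 := by
    have : ¬ (p:ℤ) ∣ ((M:ℤ))^j := by
      intro hd
      exact hMdvd (by exact_mod_cast Int.Prime.dvd_pow' (by exact_mod_cast hp.out) hd)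
    have := (padicNorm.int_eq_one_iff (p := p) ((M:ℤ)^j)).mpr this
    push_cast at this ⊢
    exact this
  rw [hnormM, div_one]
  have := norm_int_le p (z:ℤ) claimB
  push_cast at this ⊢
  exact this

lemma norm_neg_one_pow (p m : ℕ) [Fact p.Prime] : padicNorm p ((-1:ℚ)^m) = 1 := by
  rcases Nat.even_or_odd m with h | h
  · rw [h.neg_one_pow, padicNorm.one]
  · rw [h.neg_one_pow, padicNorm.neg, padicNorm.one]

lemma elemSymH_zero (n : ℕ) : elemSymH n 0 = 1 := by
  simp [elemSymH]

lemma pinv_nonneg (p : ℕ) [Fact p.Prime] : (0:ℚ) ≤ ((p:ℚ))⁻¹ := by positivity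

lemma pinv_le_one (p : ℕ) [hp : Fact p.Prime] : ((p:ℚ))⁻¹ ≤ 1 := by
  rw [inv_le_one_iff₀]
  right
  exact_mod_cast hp.out.one_le

lemma hE (p : ℕ) [hp : Fact p.Prime] :
    ∀ k, 1 ≤ k → k ≤ p - 2 → padicNorm p (elemSymH (p-1) k) ≤ ((p:ℚ))⁻¹ := by
  intro k
  induction k using Nat.strong_induction_on with
  | _ k IH =>
    intro hk1 hk2
    have hp1 : 1 < p := hp.out.one_lt
    have hsum : padicNorm p ((k:ℚ) * elemSymH (p-1) k) ≤ ((p:ℚ))⁻¹ := by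
      rw [newton, padicNorm.mul, norm_neg_one_pow, one_mul]
      apply padicNorm.sum_le' _ (pinv_nonneg p)
      rintro ⟨a, b⟩ hab
      simp only [Finset.mem_filter, Finset.HasAntidiagonal.mem_antidiagonal] at hab
      obtain ⟨habk, halt⟩ := hab
      rw [padicNorm.mul, padicNorm.mul, norm_neg_one_pow, one_mul]
      have hb : padicNorm p (genHarmonic (p-1) b) ≤ ((p:ℚ))⁻¹ :=
        hP p b (by omega) (by omega)
      have ha : padicNorm p (elemSymH (p-1) a) ≤ 1 := by
        rcases Nat.eq_zero_or_pos a with rfl | hapos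
        · rw [elemSymH_zero, padicNorm.one]
        · exact (IH a halt hapos (by omega)).trans (pinv_le_one p)
      calc padicNorm p (elemSymH (p-1) a) * padicNorm p (genHarmonic (p-1) b)
          ≤ 1 * ((p:ℚ))⁻¹ := by
            apply mul_le_mul ha hb (padicNorm.nonneg _) zero_le_one
        _ = ((p:ℚ))⁻¹ := one_mul _
    rwa [padicNorm.mul, norm_nat_one p k (by omega) (by omega), one_mul] at hsum

theorem stmt12 (p r : ℕ) (hp : p.Prime) (hodd : Odd p)
    (hr2 : 2 ≤ r) (hreven : Even r) (hpr : r + 3 ≤ p) :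
    elemSymH (p - 1) r + (1 / (r : ℚ)) * genHarmonic (p - 1) r = 0 ∨
    padicValRat p (elemSymH (p - 1) r + (1 / (r : ℚ)) * genHarmonic (p - 1) r) ≥ 2 := by
  haveI : Fact p.Prime := ⟨hp⟩
  have hp1 : 1 < p := hp.one_lt
  set G : ℚ := elemSymH (p - 1) r + (1 / (r : ℚ)) * genHarmonic (p - 1) r with hG
  set S := Finset.HasAntidiagonal.antidiagonal r |>.filter (fun a => a.1 < r) with hS
  have h0r : ((0:ℕ), r) ∈ S := by
    simp only [hS, Finset.mem_filter, Finset.HasAntidiagonal.mem_antidiagonal]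
    omega
  have hsplit := Finset.add_sum_erase S
    (fun a => (-1:ℚ) ^ a.1 * elemSymH (p-1) a.1 * genHarmonic (p-1) a.2) h0r
  have hnegone : ((-1:ℚ)) ^ (r + 1) = -1 := by
    rcases hreven with ⟨m, hm⟩
    rw [show r + 1 = 2*m + 1 by omega, pow_succ, pow_mul]
    norm_num
  have key : (r:ℚ) * elemSymH (p-1) r + genHarmonic (p-1) r =
      - ∑ a ∈ S.erase ((0:ℕ), r),
        (-1:ℚ) ^ a.1 * elemSymH (p-1) a.1 * genHarmonic (p-1) a.2 := by
    have hn := newton (p-1) r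
    rw [← hS, ← hsplit, hnegone] at hn
    simp only [pow_zero, elemSymH_zero, one_mul] at hn
    linarith [hn]
  -- norm bound on the sum
  have hbound : padicNorm p ((r:ℚ) * elemSymH (p-1) r + genHarmonic (p-1) r)
      ≤ ((p:ℚ))⁻¹ * ((p:ℚ))⁻¹ := by
    rw [key, padicNorm.neg]
    apply padicNorm.sum_le' _ (by positivity)
    rintro ⟨a, b⟩ hab
    simp only [Finset.mem_erase, hS, Finset.mem_filter, Finset.HasAntidiagonal.mem_antidiagonal,
      Prod.mk.injEq, ne_eq, not_and] at hab
    obtain ⟨hne, habr, haltr⟩ := hab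
    have ha1 : 1 ≤ a := by
      rcases Nat.eq_zero_or_pos a with rfl | h
      · exact absurd (by omega : b = r) (hne rfl)
      · exact h
    rw [padicNorm.mul, padicNorm.mul, norm_neg_one_pow, one_mul]
    apply mul_le_mul (hE p a ha1 (by omega)) (hP p b (by omega) (by omega))
      (padicNorm.nonneg _) (by positivity)
  -- relate G to the combination
  have hrq : (r:ℚ) ≠ 0 := by positivity
  have hGf : G = (1/(r:ℚ)) * ((r:ℚ) * elemSymH (p-1) r + genHarmonic (p-1) r) := by
    rw [hG]; field_simp
  have hnormG : padicNorm p G ≤ ((p:ℚ))⁻¹ * ((p:ℚ))⁻¹ := by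
    have h1r : padicNorm p (1/(r:ℚ)) = 1 := by
      rw [padicNorm.div, padicNorm.one, norm_nat_one p r (by omega) (by omega), div_one]
    rw [hGf, padicNorm.mul, h1r, one_mul]
    exact hbound
  by_cases hG0 : G = 0
  · exact Or.inl hG0
  · right
    have hval := padicNorm.eq_zpow_of_nonzero (p := p) hG0
    rw [hval] at hnormG
    have hpp : (1:ℚ) < (p:ℚ) := by exact_mod_cast hp1
    have h2 : ((p:ℚ))⁻¹ * ((p:ℚ))⁻¹ = (p:ℚ) ^ (-2 : ℤ) := by
      rw [zpow_neg, zpow_two, mul_inv]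
    rw [h2, zpow_le_zpow_iff_right₀ hpp] at hnormG
    omega
end
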